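/- Let κ be a cardinal with a distinguished index r ∈ κ such that α_r = ω₁ and 2 ≤ α_i < ω₁ for all i ≠ r. Then the least ordinal β with β → (top α_i)^1_{i∈κ} is max{ω₁, κ⁺}. In particular, for every coloring c : κ⁺ → κ (κ infinite), either c⁻¹({r}) contains a subspace homeomorphic to ω₁, or c⁻¹({i}) contains a subspace homeomorphic to α_i for some i ≠ r. -/

import Mathlib

open Set Ordinal
open scoped Cardinal

noncomputable section

/-- Derived set (non-isolated points) of a set of ordinals, as a subspace. -/
def deriv' (s : Set Ordinal.{0}) : Set Ordinal.{0} := {x ∈ s | x ∈ closure (s \ {x})}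

/-- Iterated Cantor–Bendixson derivative. -/
def iterDeriv (s : Set Ordinal.{0}) (o : Ordinal.{0}) : Set Ordinal.{0} :=
  Ordinal.limitRecOn o s (fun _ ih => deriv' ih) (fun o _ ih => ⋂ (p : Ordinal.{0}) (h : p < o), ih p h)

/-- `s` contains a homeomorphic copy of the ordinal `α` (with its order topology). -/
def HomeoCopy (α : Ordinal.{0}) (s : Set Ordinal.{0}) : Prop :=
  ∃ t : Set Ordinal, t ⊆ s ∧ Nonempty ((Iio α : Set Ordinal.{0}) ≃ₜ t)

/-- Two ordinals are biembeddable: each is homeomorphic to a subspace of the other. -/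
def Biembed (α β : Ordinal.{0}) : Prop := HomeoCopy α (Iio β) ∧ HomeoCopy β (Iio α)

/-- Two sets of ordinals are order-homeomorphic: there is an order-preserving homeomorphism. -/
def OrderHomeo (X Y : Set Ordinal.{0}) : Prop :=
  ∃ e : X ≃ₜ Y, ∀ a b : X, a ≤ b ↔ e a ≤ e b

/-- An ordinal is order-reinforcing. -/
def OrderReinforcing (α : Ordinal.{0}) : Prop :=
  ∀ X : Set Ordinal, Nonempty ((Iio α : Set Ordinal.{0}) ≃ₜ X) → ∃ Y ⊆ X, OrderHomeo (Iio α) Y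

/-- The Cantor–Bendixson rank of an ordinal: the least exponent in its Cantor normal form. -/
def CB (x : Ordinal.{0}) : Ordinal := if x = 0 then 0 else sSup {γ | (ω : Ordinal.{0}) ^ γ ∣ x}

universe u

noncomputable def Ordinal.nadd (a b : Ordinal.{u}) : Ordinal.{u} :=
  max (blsub.{u, u} a fun a' _ => nadd a' b) (blsub.{u, u} b fun b' _ => nadd a b')
termination_by (a, b)

infixl:65 " ♯ " => Ordinal.nadd

/-- The natural (Hessenberg) sum of a finite family of ordinals. -/
def natSumFam {k : ℕ} (α : Fin k → Ordinal.{0}) : Ordinal := (List.ofFn α).foldr (· ♯ ·) 0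

/-- The Milner–Rado sum of a finite family of ordinals. -/
def mrSumFam {k : ℕ} (α : Fin k → Ordinal.{0}) : Ordinal :=
  sInf {δ | ∀ β : Fin k → Ordinal, (∀ i, β i < α i) → δ ≠ natSumFam β}

/-- The topological pigeonhole relation `β → (top α i)¹` for finitely many colours. -/
def TopPH {k : ℕ} (β : Ordinal.{0}) (α : Fin k → Ordinal.{0}) : Prop :=
  ∀ c : Ordinal → Fin k, ∃ i, HomeoCopy (α i) (Iio β ∩ c ⁻¹' {i})

/-- The topological pigeonhole relation with an arbitrary index type of colours. -/
def TopPHFam {ι : Type*} (β : Ordinal.{0}) (α : ι → Ordinal.{0}) : Prop :=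
  ∀ c : Ordinal → ι, ∃ i, HomeoCopy (α i) (Iio β ∩ c ⁻¹' {i})

/-- `ω̄[γ, m]`: `ω ^ γ * m + 1` if `γ > 0`, and `m` if `γ = 0`. -/
def obar (γ : Ordinal.{0}) (m : ℕ) : Ordinal := if γ = 0 then (m : Ordinal.{0}) else ω ^ γ * m + 1

/-- `C` is closed and unbounded in `o`. -/
def IsClubIn (C : Set Ordinal.{0}) (o : Ordinal.{0}) : Prop :=
  C ⊆ Iio o ∧ (∀ x < o, ∃ y ∈ C, x ≤ y) ∧
    ∀ x < o, x ≠ 0 → (∀ y < x, ∃ z ∈ C, y < z ∧ z < x) → x ∈ C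

/-- `S` is stationary in `o`: it meets every club subset of `o`. -/
def StationaryIn (S : Set Ordinal.{0}) (o : Ordinal.{0}) : Prop :=
  ∀ C, IsClubIn C o → (S ∩ C).Nonempty



namespace PH

open Order Filter Topology

lemma isOpen_Ioc_ord {a b : Ordinal.{0}} : IsOpen (Ioc a b) := by
  rw [Ordinal.isOpen_iff]
  intro o ho _
  exact ⟨a, ho.1, fun x hx => ⟨hx.1, hx.2.le.trans ho.2⟩⟩

lemma mem_nhds_Ioc {a b : Ordinal.{0}} (h : a < b) : Ioc a b ∈ 𝓝 b :=
  isOpen_Ioc_ord.mem_nhds ⟨h, le_rfl⟩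

structure IsGoodF (a : Ordinal.{0}) (f : Ordinal.{0} → Ordinal.{0}) (s : Set Ordinal.{0}) : Prop where
  mono : StrictMonoOn f (Iio a)
  cont : ∀ y, y < a → Order.IsSuccLimit y → IsLUB (f '' Iio y) (f y)
  mem : ∀ y, y < a → f y ∈ s

variable {a : Ordinal.{0}} {f : Ordinal.{0} → Ordinal.{0}} {s : Set Ordinal.{0}}

lemma IsGoodF.le_iff_le (h : IsGoodF a f s) {x y : Ordinal} (hx : x < a) (hy : y < a) :
    f x ≤ f y ↔ x ≤ y := by
  constructor
  · intro hf
    by_contra hxy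
    exact absurd (h.mono hy hx (lt_of_not_ge hxy)) (not_lt.2 hf)
  · intro hxy
    rcases eq_or_lt_of_le hxy with rfl | hxy
    · exact le_rfl
    · exact (h.mono hx hy hxy).le

lemma IsGoodF.fy_isLimit (h : IsGoodF a f s) {y : Ordinal} (hy : y < a)
    (hl : Order.IsSuccLimit y) : Order.IsSuccLimit (f y) := by
  have hlub := h.cont y hy hl
  rw [Ordinal.isSuccLimit_iff, Order.isSuccPrelimit_iff_succ_lt]
  constructor
  · intro h0
    have := h.mono (hl.pos.trans hy) hy hl.pos
    rw [h0] at this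
    exact absurd this not_lt_zero
  · intro w hw
    rcases lt_or_eq_of_le (Order.succ_le_iff.2 hw) with h' | h'
    · exact h'
    · exfalso
      have hub : w ∈ upperBounds (f '' Iio y) := by
        rintro _ ⟨z, hz, rfl⟩
        have : f z < f y := h.mono (hz.trans hy) hy hz
        rw [← h'] at this
        exact Order.lt_succ_iff.1 this
      have := hlub.2 hub
      rw [← h'] at this
      exact absurd this (not_le.2 (Order.lt_succ w))

lemma IsGoodF.exists_big (h : IsGoodF a f s) {y u : Ordinal} (hy : y < a)
    (hl : Order.IsSuccLimit y) (hu : u < f y) : ∃ z < y, u < f z := by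
  by_contra hc
  push_neg at hc
  have hub : u ∈ upperBounds (f '' Iio y) := by
    rintro _ ⟨z, hz, rfl⟩; exact hc z hz
  exact absurd ((h.cont y hy hl).2 hub) (not_le.2 hu)

lemma IsGoodF.continuousOn (h : IsGoodF a f s) : ContinuousOn f (Iio a) := by
  intro y hy
  by_cases hlim : Order.IsSuccLimit y
  · rw [ContinuousWithinAt, tendsto_nhds]
    intro V hV hfy
    obtain ⟨u, hu, hIoo⟩ := (Ordinal.isOpen_iff.1 hV) (f y) hfy (h.fy_isLimit hy hlim)
    obtain ⟨z, hz, hfz⟩ := h.exists_big hy hlim hu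
    have h1 : Ioc z y ∩ Iio a ∈ 𝓝[Iio a] y :=
      inter_mem (mem_nhdsWithin_of_mem_nhds (mem_nhds_Ioc hz)) self_mem_nhdsWithin
    refine mem_of_superset h1 ?_
    rintro w ⟨⟨hzw, hwy⟩, hwa⟩
    rcases eq_or_lt_of_le hwy with rfl | hwy
    · exact hfy
    · refine hIoo ⟨hfz.trans ?_, h.mono hwa hy hwy⟩
      exact h.mono (hz.trans hy) hwa hzw
  · have : 𝓝 y = pure y := Ordinal.nhds_eq_pure.2 hlim
    have h2 : Filter.Tendsto f (pure y) (𝓝 (f y)) := tendsto_pure_nhds f y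
    exact h2.mono_left (nhdsWithin_le_nhds.trans this.le)

def goodT (f : Ordinal.{0} → Ordinal.{0}) (a : Ordinal.{0}) : Set Ordinal.{0} := f '' Iio a

def IsGoodF.equiv (h : IsGoodF a f s) : (Iio a : Set Ordinal.{0}) ≃ goodT f a where
  toFun y := ⟨f y.1, mem_image_of_mem _ y.2⟩
  invFun x := ⟨Classical.choose x.2, (Classical.choose_spec x.2).1⟩
  left_inv y := by
    have h2 := Classical.choose_spec (mem_image_of_mem f y.2)
    exact Subtype.ext (h.mono.injOn h2.1 y.2 h2.2)
  right_inv x := by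
    exact Subtype.ext (Classical.choose_spec x.2).2

lemma IsGoodF.equiv_symm_spec (h : IsGoodF a f s) (x : goodT f a) :
    (h.equiv.symm x).1 ∈ Iio a ∧ f (h.equiv.symm x).1 = x.1 :=
  ⟨(Classical.choose_spec x.2).1, (Classical.choose_spec x.2).2⟩

lemma IsGoodF.continuous_symm (h : IsGoodF a f s) :
    Continuous (fun x : goodT f a => h.equiv.symm x) := by
  rw [continuous_induced_rng]
  rw [continuous_iff_continuousAt]
  intro x
  set y : Ordinal := (h.equiv.symm x).1 with hy
  have hspec := h.equiv_symm_spec x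
  have hya : y < a := hspec.1
  have hfy : f y = x.1 := hspec.2
  rw [ContinuousAt, nhds_induced]
  -- goal : Tendsto (fun x => (h.equiv.symm x).1) (comap val (𝓝 x.1)) (𝓝 y)
  by_cases hlim : Order.IsSuccLimit y
  · rw [tendsto_nhds]
    intro V hV hyV
    obtain ⟨u, hu, hIoo⟩ := (Ordinal.isOpen_iff.1 hV) y hyV hlim
    have hW : Ioc (f u) x.1 ∈ 𝓝 x.1 := by
      rw [← hfy]
      exact mem_nhds_Ioc (h.mono (hu.trans hya) hya hu)
    refine mem_comap.2 ⟨Ioc (f u) x.1, hW, ?_⟩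
    rintro x' hx'
    set z : Ordinal := (h.equiv.symm x').1 with hz
    have hspec' := h.equiv_symm_spec x'
    have hza : z < a := hspec'.1
    have hfz : f z = x'.1 := hspec'.2
    simp only [Set.mem_preimage, Set.mem_Ioc] at hx'
    have huz : u < z := by
      by_contra hc
      have := (h.le_iff_le hza (hu.trans hya)).2 (not_lt.1 hc)
      rw [hfz] at this
      exact absurd hx'.1 (not_lt.2 this)
    have hzy : z ≤ y := by
      have := (h.le_iff_le hza hya).1 (by rw [hfz, hfy]; exact hx'.2)
      exact this
    rcases eq_or_lt_of_le hzy with heq | hlt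
    · show z ∈ V; rw [heq]; exact hyV
    · exact hIoo ⟨huz, hlt⟩
  · -- y is 0 or a successor : x is isolated in goodT f a
    have hsing : ∃ W ∈ 𝓝 x.1, ∀ x' : goodT f a, x'.1 ∈ W → x' = x := by
      rcases Ordinal.zero_or_succ_or_isSuccLimit y with h0 | ⟨w, hw⟩ | hl
      · refine ⟨Iio (x.1 + 1), isOpen_Iio.mem_nhds (Set.mem_Iio.2 (lt_add_one _)), ?_⟩
        intro x' hx'
        have hspec' := h.equiv_symm_spec x'
        have : f (h.equiv.symm x').1 ≤ f y := by
          rw [hfy, hspec'.2]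
          exact Order.lt_succ_iff.1 hx'
        have hz0 : (h.equiv.symm x').1 ≤ y := (h.le_iff_le hspec'.1 hya).1 this
        rw [h0, nonpos_iff_eq_zero] at hz0
        have : x'.1 = x.1 := by rw [← hspec'.2, hz0, ← h0, hfy]
        exact Subtype.ext this
      · replace hw := hw.symm
        refine ⟨Ioc (f w) x.1, ?_, ?_⟩
        · rw [← hfy]
          exact mem_nhds_Ioc (h.mono ((lt_succ w).trans_le (hw ▸ le_rfl : succ w ≤ y) |>.trans hya) hya (hw ▸ lt_succ w))
        · intro x' hx'
          have hspec' := h.equiv_symm_spec x'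
          set z := (h.equiv.symm x').1
          have hwz : w < z := by
            by_contra hc
            have hwa : w < a := ((hw ▸ lt_succ w : w < y)).trans hya
            have := (h.le_iff_le hspec'.1 hwa).2 (not_lt.1 hc)
            rw [hspec'.2] at this
            exact absurd hx'.1 (not_lt.2 this)
          have hzy : z ≤ y := by
            have := (h.le_iff_le hspec'.1 hya).1 (by rw [hspec'.2, hfy]; exact hx'.2)
            exact this
          have : z = y := le_antisymm hzy (by rw [hw]; exact Order.succ_le_iff.2 hwz)
          have : x'.1 = x.1 := by rw [← hspec'.2, this, hfy]
          exact Subtype.ext this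
      · exact absurd hl hlim
    obtain ⟨W, hW, hWs⟩ := hsing
    have hpure : ({x} : Set (goodT f a)) ∈ comap (Subtype.val : goodT f a → Ordinal) (𝓝 x.1) := by
      refine mem_comap.2 ⟨W, hW, ?_⟩
      intro x' hx'
      exact hWs x' hx'
    have : Tendsto (fun x' : goodT f a => (h.equiv.symm x').1) (pure x) (𝓝 y) :=
      tendsto_pure_nhds _ x
    exact this.mono_left (le_pure_iff.2 hpure)

lemma IsGoodF.homeoCopy (h : IsGoodF a f s) : HomeoCopy a s := by
  refine ⟨goodT f a, ?_, ⟨?_⟩⟩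
  · rintro _ ⟨z, hz, rfl⟩; exact h.mem z hz
  · refine Homeomorph.mk h.equiv ?_ ?_
    · apply Continuous.subtype_mk
      have := continuousOn_iff_continuous_restrict.1 h.continuousOn
      exact this
    · exact h.continuous_symm

def ClubIn (C : Set Ordinal.{0}) (l : Ordinal.{0}) : Prop :=
  C ⊆ Iio l ∧ (∀ x < l, ∃ y ∈ C, x < y) ∧
    ∀ x, x < l → x ≠ 0 → (∀ y < x, ∃ z ∈ C, y < z ∧ z < x) → x ∈ C

def StatIn (S : Set Ordinal.{0}) (l : Ordinal.{0}) : Prop :=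
  ∀ C, ClubIn C l → (S ∩ C).Nonempty

variable {l : Ordinal.{0}}

lemma isLimit_of_cof (hl : ℵ₀ < l.cof) : Order.IsSuccLimit l := Ordinal.aleph0_le_cof.1 hl.le

lemma clubIn_Ioo (hl : ℵ₀ < l.cof) {x : Ordinal} (hx : x < l) : ClubIn (Ioo x l) l := by
  have hlim := isLimit_of_cof hl
  refine ⟨fun z hz => hz.2, fun z hz => ?_, fun w hw hw0 hacc => ?_⟩
  · refine ⟨max x z + 1, ⟨?_, ?_⟩, ?_⟩
    · exact (le_max_left x z).trans_lt (lt_add_one _)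
    · rw [Ordinal.add_one_eq_succ]
      exact hlim.succ_lt (max_lt hx hz)
    · exact (le_max_right x z).trans_lt (lt_add_one _)
  · obtain ⟨z, hzC, _, hzw⟩ := hacc 0 (pos_iff_ne_zero.2 hw0)
    exact ⟨hzC.1.trans hzw, hw⟩

lemma nextIn {C : Set Ordinal.{0}} (hC : ClubIn C l) {v : Ordinal} (hv : v < l) :
    sInf (C ∩ Ioi v) ∈ C ∩ Ioi v := by
  apply csInf_mem
  obtain ⟨y, hy, hvy⟩ := hC.2.1 v hv
  exact ⟨y, hy, hvy⟩

lemma clubIn_iInter {ι : Type} [Nonempty ι] {C : ι → Set Ordinal.{0}}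
    (hι : #ι < l.cof) (hl : ℵ₀ < l.cof) (hC : ∀ i, ClubIn (C i) l) :
    ClubIn (⋂ i, C i) l := by
  have hlim := isLimit_of_cof hl
  refine ⟨?_, ?_, ?_⟩
  · intro x hx
    exact (hC (Classical.arbitrary ι)).1 (Set.mem_iInter.1 hx _)
  · intro x hx
    -- nx i v : the least element of C i above v
    set nx : ι → Ordinal → Ordinal := fun i v => sInf (C i ∩ Ioi v) with hnx
    set N : Ordinal → Ordinal := fun v => (⨆ i, nx i v) + 1 with hN
    have hNlt : ∀ v < l, N v < l := by
      intro v hv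
      have h1 : (⨆ i, nx i v) < l := by
        apply Ordinal.iSup_lt_ord hι
        intro i
        exact (hC i).1 (nextIn (hC i) hv).1
      show (⨆ i, nx i v) + 1 < l
      rw [Ordinal.add_one_eq_succ]
      exact hlim.succ_lt h1
    have hNgt : ∀ v < l, v < N v := by
      intro v hv
      have h1 : nx (Classical.arbitrary ι) v ≤ ⨆ i, nx i v :=
        le_ciSup (Ordinal.bddAbove_range _) _
      have h2 : v < nx (Classical.arbitrary ι) v := (nextIn (hC _) hv).2
      exact (h2.trans_le h1).trans (lt_add_one _)
    set u : ℕ → Ordinal := fun n => Nat.rec (x + 1) (fun _ v => N v) n with hu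
    have hux : ∀ n, u n < l := by
      intro n
      induction n with
      | zero =>
        show x + 1 < l
        rw [Ordinal.add_one_eq_succ]; exact hlim.succ_lt hx
      | succ n ih => exact hNlt _ ih
    have humono : ∀ n, u n < u (n + 1) := fun n => hNgt _ (hux n)
    set y : Ordinal := ⨆ n, u n with hy
    have huy : ∀ n, u n ≤ y := fun n => le_ciSup (Ordinal.bddAbove_range _) _
    have hyl : y < l := by
      apply Ordinal.iSup_lt_ord (by rw [Cardinal.mk_eq_aleph0]; exact hl) hux
    have hxy : x < y := (lt_add_one x).trans_le (huy 0)
    have hustep : ∀ n, u (n + 1) = N (u n) := fun n => rfl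
    have hy0 : y ≠ 0 :=
      pos_iff_ne_zero.1 ((zero_le (a := x)).trans_lt hxy)
    refine ⟨y, Set.mem_iInter.2 fun i => ?_, hxy⟩
    apply (hC i).2.2 y hyl hy0
    intro v hv
    have hvn : ∃ n, v < u n := by
      by_contra hcon
      push_neg at hcon
      exact absurd (ciSup_le hcon) (not_le.2 hv)
    obtain ⟨n, hvun⟩ := hvn
    refine ⟨nx i (u n), (nextIn (hC i) (hux n)).1, hvun.trans (nextIn (hC i) (hux n)).2, ?_⟩
    have h1 : nx i (u n) ≤ ⨆ j, nx j (u n) := le_ciSup (Ordinal.bddAbove_range _) _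
    have h2 : (⨆ j, nx j (u n)) < u (n + 1) := by rw [hustep]; exact lt_add_one _
    exact (h1.trans_lt h2).trans_le (huy (n + 1))
  · intro w hw hw0 hacc
    refine Set.mem_iInter.2 fun i => ?_
    apply (hC i).2.2 w hw hw0
    intro v hv
    obtain ⟨z, hz, hvz, hzw⟩ := hacc v hv
    exact ⟨z, Set.mem_iInter.1 hz i, hvz, hzw⟩

lemma clubIn_inter {C D : Set Ordinal.{0}} (hl : ℵ₀ < l.cof)
    (hC : ClubIn C l) (hD : ClubIn D l) : ClubIn (C ∩ D) l := by
  have h2 : (2 : Cardinal.{0}) < l.cof := (Cardinal.nat_lt_aleph0 2).trans hl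
  have := clubIn_iInter (l := l) (ι := Bool) (C := fun b => if b then C else D)
    (by rw [Cardinal.mk_bool]; exact h2) hl (by intro b; cases b <;> simpa)
  have heq : (⋂ b : Bool, if b then C else D) = C ∩ D := by
    ext x; simp [Bool.forall_bool, and_comm]
  rwa [heq] at this

lemma StatIn.nonempty {S : Set Ordinal.{0}} (hl : ℵ₀ < l.cof) (hS : StatIn S l) :
    S.Nonempty := by
  obtain ⟨x, hx, _⟩ := hS _ (clubIn_Ioo hl (isLimit_of_cof hl).pos)
  exact ⟨x, hx⟩

lemma StatIn.mono {S T : Set Ordinal.{0}} (hST : S ⊆ T) (hS : StatIn S l) : StatIn T l :=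
  fun C hC => (hS C hC).imp fun x hx => ⟨hST hx.1, hx.2⟩

lemma StatIn.inter_Ioo {S : Set Ordinal.{0}} (hl : ℵ₀ < l.cof) (hS : StatIn S l)
    {x : Ordinal} (hx : x < l) : StatIn (S ∩ Ioo x l) l := by
  intro C hC
  obtain ⟨z, hzS, hz⟩ := hS _ (clubIn_inter hl hC (clubIn_Ioo hl hx))
  exact ⟨z, ⟨hzS, hz.2⟩, hz.1⟩

lemma exists_statIn {ι : Type} [Nonempty ι] {S : Set Ordinal.{0}} {T : ι → Set Ordinal.{0}}
    (hι : #ι < l.cof) (hl : ℵ₀ < l.cof) (hS : StatIn S l)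
    (hcover : ∀ x ∈ S, ∃ i, x ∈ T i) : ∃ i, StatIn (S ∩ T i) l := by
  by_contra hcon
  push_neg at hcon
  simp only [StatIn, not_forall, not_nonempty_iff_eq_empty] at hcon
  choose D hD hDempty using hcon
  obtain ⟨x, hxS, hxD⟩ := hS _ (clubIn_iInter hι hl hD)
  obtain ⟨i, hi⟩ := hcover x hxS
  have : x ∈ (S ∩ T i) ∩ D i := ⟨⟨hxS, hi⟩, Set.mem_iInter.1 hxD i⟩
  rw [hDempty i] at this
  exact this

lemma clubIn_closurePts (hl : ℵ₀ < l.cof) (hcard : ∀ x < l, x.card < l.cof)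
    (F : Ordinal.{0} → Ordinal.{0}) (hF : ∀ x < l, F x < l) :
    ClubIn {x | x < l ∧ x ≠ 0 ∧ ∀ ξ < x, F ξ < x} l := by
  have hlim := isLimit_of_cof hl
  refine ⟨fun z hz => hz.1, ?_, ?_⟩
  · intro x hx
    set N : Ordinal → Ordinal := fun v => Ordinal.blsub.{0,0} v (fun ξ _ => F ξ) ⊔ (v + 1)
      with hN
    have hNlt : ∀ v < l, N v < l := by
      intro v hv
      apply max_lt
      · exact Ordinal.blsub_lt_ord (hcard v hv) (fun ξ hξ => hF ξ (hξ.trans hv))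
      · rw [Ordinal.add_one_eq_succ]; exact hlim.succ_lt hv
    set u : ℕ → Ordinal := fun n => Nat.rec (x + 1) (fun _ v => N v) n with hu
    have hustep : ∀ n, u (n + 1) = N (u n) := fun n => rfl
    have hux : ∀ n, u n < l := by
      intro n
      induction n with
      | zero =>
        show x + 1 < l
        rw [Ordinal.add_one_eq_succ]; exact hlim.succ_lt hx
      | succ n ih => exact hNlt _ ih
    have humono : ∀ n, u n < u (n + 1) := by
      intro n
      rw [hustep]
      exact (lt_add_one (u n)).trans_le (le_max_right _ _)
    set y : Ordinal := ⨆ n, u n with hy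
    have huy : ∀ n, u n ≤ y := fun n => le_ciSup (Ordinal.bddAbove_range _) _
    have hyl : y < l := Ordinal.iSup_lt_ord (by rw [Cardinal.mk_eq_aleph0]; exact hl) hux
    have hxy : x < y := (lt_add_one x).trans_le (huy 0)
    refine ⟨y, ⟨hyl, pos_iff_ne_zero.1 ((zero_le (a := x)).trans_lt hxy), ?_⟩, hxy⟩
    intro ξ hξ
    have hvn : ∃ n, ξ < u n := by
      by_contra hcon
      push_neg at hcon
      exact absurd (ciSup_le hcon) (not_le.2 hξ)
    obtain ⟨n, hn⟩ := hvn
    have h1 : F ξ < Ordinal.blsub.{0,0} (u n) (fun ζ _ => F ζ) := Ordinal.lt_blsub _ _ hn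
    have h2 : Ordinal.blsub.{0,0} (u n) (fun ζ _ => F ζ) ≤ u (n + 1) := by
      rw [hustep]; exact le_max_left _ _
    exact (h1.trans_le h2).trans_le (huy (n + 1))
  · intro w hw hw0 hacc
    refine ⟨hw, hw0, ?_⟩
    intro ξ hξ
    obtain ⟨z, hz, hξz, hzw⟩ := hacc ξ hξ
    exact (hz.2.2 ξ hξz).trans hzw

lemma cof_eq_aleph0_of_seq {x : Ordinal.{0}} (e : ℕ → Ordinal.{0})
    (hlt : ∀ n, e n < x) (hcof : ∀ y < x, ∃ n, y < e n) : x.cof = ℵ₀ := by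
  have hx : x = Ordinal.lsub.{0,0} e := by
    apply le_antisymm
    · by_contra hcon
      push_neg at hcon
      obtain ⟨n, hn⟩ := hcof _ hcon
      exact absurd (Ordinal.lt_lsub e n) (not_lt.2 hn.le)
    · exact Ordinal.lsub_le hlt
  apply le_antisymm
  · calc x.cof ≤ #ℕ := by rw [hx]; exact Ordinal.cof_lsub_le e
    _ = ℵ₀ := Cardinal.mk_eq_aleph0 ℕ
  · rw [Ordinal.aleph0_le_cof]
    rw [Ordinal.isSuccLimit_iff, Order.isSuccPrelimit_iff_succ_lt]
    refine ⟨?_, ?_⟩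
    · intro h0
      rw [h0] at hlt
      exact absurd (hlt 0) not_lt_zero
    · intro a ha
      obtain ⟨n, hn⟩ := hcof a ha
      exact (Order.succ_le_iff.2 hn).trans_lt (hlt n)

lemma exists_seq_of_cof_aleph0 {x : Ordinal.{0}} (hx : x.cof = ℵ₀) :
    ∃ e : ℕ → Ordinal.{0}, StrictMono e ∧ (∀ n, e n < x) ∧ ∀ y < x, ∃ n, y < e n := by
  obtain ⟨f, hf⟩ := Ordinal.exists_fundamental_sequence x
  have ho : x.cof.ord = ω := by rw [hx, Cardinal.ord_aleph0]
  have hno : ∀ n : ℕ, (n : Ordinal.{0}) < x.cof.ord := by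
    intro n; rw [ho]; exact Ordinal.nat_lt_omega0 n
  refine ⟨fun n => f n (hno n), ?_, ?_, ?_⟩
  · intro m n hmn
    exact hf.2.1 _ _ (by exact_mod_cast hmn)
  · intro n
    rw [← hf.2.2]
    exact Ordinal.lt_blsub _ _ _
  · intro y hy
    rw [← hf.2.2, Ordinal.lt_blsub_iff] at hy
    obtain ⟨b, hb, hyb⟩ := hy
    obtain ⟨n, rfl⟩ := Ordinal.lt_omega0.1 (ho ▸ hb)
    refine ⟨n + 1, hyb.trans_lt (hf.2.1 _ _ ?_)⟩
    exact_mod_cast Nat.lt_succ_self n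

lemma ltao {a b : Ordinal.{0}} : a < b + 1 ↔ a ≤ b := by
  rw [Ordinal.add_one_eq_succ]; exact Order.lt_succ_iff

/-- A closed copy of `γ + 1` inside `S` with maximum `δ`. -/
def TCopy (γ : Ordinal.{0}) (S : Set Ordinal.{0}) (δ : Ordinal.{0}) : Prop :=
  ∃ f : Ordinal.{0} → Ordinal.{0},
    StrictMonoOn f (Iio (γ + 1)) ∧
    (∀ y < γ + 1, Order.IsSuccLimit y → IsLUB (f '' Iio y) (f y)) ∧
    (∀ y < γ + 1, f y ∈ S) ∧ f γ = δ

lemma friedman (hl : ℵ₀ < l.cof) (hcard : ∀ x < l, x.card < l.cof) :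
    ∀ γ, γ < ω₁ → ∀ S : Set Ordinal.{0},
      (∀ x ∈ S, x < l ∧ x.cof = ℵ₀) → StatIn S l →
      StatIn {δ | TCopy γ S δ} l := by
  intro γ
  induction γ using Ordinal.induction with
  | h γ IH =>
    intro hγ S hsub hS
    rcases Ordinal.zero_or_succ_or_isSuccLimit γ with rfl | ⟨β, hβ⟩ | hγlim
    · -- zero case
      refine hS.mono ?_
      intro δ hδ
      refine ⟨fun _ => δ, ?_, ?_, fun _ _ => hδ, rfl⟩
      · intro x hx y hy hxy
        simp only [Set.mem_Iio, zero_add, Ordinal.lt_one_iff_zero] at hx hy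
        exact absurd hxy (by rw [hx, hy]; exact lt_irrefl 0)
      · intro y hy hylim
        rw [zero_add, Ordinal.lt_one_iff_zero] at hy
        exact absurd hylim (hy ▸ Ordinal.not_isSuccLimit_zero)
    · -- successor case
      have hβ1 : γ = β + 1 := by rw [Ordinal.add_one_eq_succ]; exact hβ.symm
      subst hβ1
      have hβω : β < ω₁ := (lt_add_one β).trans hγ
      have hT := IH β (lt_add_one β) hβω S hsub hS
      obtain ⟨δ₀, f₀, hf₀mono, hf₀cont, hf₀mem, hf₀top⟩ := hT.nonempty hl
      have hδ₀S : δ₀ ∈ S := hf₀top ▸ hf₀mem β (lt_add_one β)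
      have hδ₀l : δ₀ < l := (hsub δ₀ hδ₀S).1
      intro C hC
      obtain ⟨δ, hδS, hδC⟩ := (hS.inter_Ioo hl hδ₀l) C hC
      obtain ⟨hδS', hδ₀δ, hδl⟩ := hδS
      set f : Ordinal.{0} → Ordinal.{0} := fun y => if y = β + 1 then δ else f₀ y with hf
      have hfval : ∀ y, y ≠ β + 1 → f y = f₀ y := fun y hy => if_neg hy
      have hftop : f (β + 1) = δ := if_pos rfl
      have hfle : ∀ x, x < β + 1 → f x ≤ δ₀ := by
        intro x hx
        rw [hfval x hx.ne]
        rcases eq_or_lt_of_le (ltao.1 hx) with rfl | hxβ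
        · exact hf₀top.le
        · exact (hf₀top ▸ hf₀mono hx (lt_add_one β) hxβ).le
      refine ⟨δ, ⟨f, ?_, ?_, ?_, hftop⟩, hδC⟩
      · intro x hx y hy hxy
        by_cases hyt : y = β + 1
        · subst hyt
          rw [hftop]
          exact (hfle x hxy).trans_lt hδ₀δ
        · have hy' : y < β + 1 := lt_of_le_of_ne (ltao.1 hy) hyt
          rw [hfval x (hxy.trans hy').ne, hfval y hyt]
          exact hf₀mono (hxy.trans hy') hy' hxy
      · intro y hy hylim
        have hyt : y ≠ β + 1 := by
          intro h
          rw [h, Ordinal.add_one_eq_succ] at hylim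
          exact Order.not_isSuccLimit_succ β hylim
        have hy' : y < β + 1 := lt_of_le_of_ne (ltao.1 hy) hyt
        have himg : f '' Iio y = f₀ '' Iio y := by
          apply Set.image_congr
          intro z hz
          exact hfval z (hz.trans hy').ne
        rw [himg, hfval y hyt]
        exact hf₀cont y hy' hylim
      · intro y hy
        by_cases hyt : y = β + 1
        · rw [hyt, hftop]; exact hδS'
        · rw [hfval y hyt]
          exact hf₀mem y (lt_of_le_of_ne (ltao.1 hy) hyt)
    · -- limit case
      have hllim := isLimit_of_cof hl
      have hγcof : γ.cof = ℵ₀ := by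
        apply le_antisymm
        · have h1 : γ.card < ℵ₁ := Cardinal.lt_ord.1 (by rwa [Cardinal.ord_aleph])
          rw [← Cardinal.succ_aleph0, Order.lt_succ_iff] at h1
          exact (Ordinal.cof_le_card γ).trans h1
        · exact Ordinal.aleph0_le_cof.2 hγlim
      obtain ⟨b, hbmono, hbγ, hbcof⟩ := exists_seq_of_cof_aleph0 hγcof
      -- the successor-valued cofinal sequence A
      set A : ℕ → Ordinal.{0} := fun n => Nat.rec 0 (fun m v => max v (b m) + 1) n with hA
      have hAstep : ∀ n, A (n + 1) = max (A n) (b n) + 1 := fun n => rfl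
      have hAmono : ∀ n, A n < A (n + 1) := by
        intro n
        rw [hAstep]
        exact (le_max_left _ _).trans_lt (lt_add_one _)
      have hAm : Monotone A := monotone_nat_of_le_succ fun n => (hAmono n).le
      have hAlt : ∀ n, A n < γ := by
        intro n
        induction n with
        | zero => exact hγlim.pos
        | succ n ih =>
          rw [hAstep, Ordinal.add_one_eq_succ]
          exact hγlim.succ_lt (max_lt ih (hbγ n))
      have hAcof : ∀ y < γ, ∃ n, y < A (n + 1) := by
        intro y hy
        obtain ⟨n, hn⟩ := hbcof y hy
        refine ⟨n, hn.trans_le ?_⟩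
        rw [hAstep]
        exact (le_max_right _ _).trans (lt_add_one _).le
      -- decompose into blocks of order type η n + 1
      have hex : ∀ n : ℕ, ∃ e, A n + (e + 1) = A (n + 1) := by
        intro n
        have hd : A n + (A (n + 1) - A n) = A (n + 1) :=
          Ordinal.add_sub_cancel_of_le (hAmono n).le
        rcases Ordinal.zero_or_succ_or_isSuccLimit (A (n + 1) - A n) with h0 | ⟨e, he⟩ | hlm
        · rw [h0, add_zero] at hd
          exact absurd hd (hAmono n).ne
        · refine ⟨e, ?_⟩
          rw [← hd, ← he, Ordinal.add_one_eq_succ]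
        · exfalso
          have := Ordinal.isSuccLimit_add (A n) hlm
          rw [hd, hAstep, Ordinal.add_one_eq_succ] at this
          exact Order.not_isSuccLimit_succ _ this
      set η : ℕ → Ordinal.{0} := fun n => (hex n).choose with hη
      have hηspec : ∀ n, A n + (η n + 1) = A (n + 1) := fun n => (hex n).choose_spec
      have hηγ : ∀ n, η n < γ := by
        intro n
        have h1 : η n + 1 ≤ A n + (η n + 1) := le_add_self
        rw [hηspec n] at h1
        exact (lt_add_one (η n)).trans_le (h1.trans (hAlt (n + 1)).le)
      intro C hC
      -- block generator
      have hG : ∀ (n : ℕ) (ξ : Ordinal.{0}), ξ < l →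
          ∃ δ', TCopy (η n) (S ∩ Ioo ξ l) δ' := by
        intro n ξ hξ
        have hstat := IH (η n) (hηγ n) ((hηγ n).trans hγ) (S ∩ Ioo ξ l)
          (fun x hx => hsub x hx.1) (hS.inter_Ioo hl hξ)
        exact hstat.nonempty hl
      set G : ℕ → Ordinal.{0} → Ordinal.{0} := fun n ξ =>
        if h : ξ < l then (hG n ξ h).choose else 0 with hGdef
      have hGspec : ∀ (n : ℕ) (ξ : Ordinal.{0}) (h : ξ < l),
          TCopy (η n) (S ∩ Ioo ξ l) (G n ξ) := by
        intro n ξ h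
        rw [hGdef]
        simp only [dif_pos h]
        exact (hG n ξ h).choose_spec
      have hGmem : ∀ (n : ℕ) (ξ : Ordinal.{0}) (h : ξ < l), G n ξ ∈ S ∩ Ioo ξ l := by
        intro n ξ h
        obtain ⟨g, _, _, hmem, htop⟩ := hGspec n ξ h
        exact htop ▸ hmem (η n) (lt_add_one _)
      set F : Ordinal.{0} → Ordinal.{0} := fun ξ => ⨆ n, G n ξ with hFdef
      have hFlt : ∀ ξ < l, F ξ < l := by
        intro ξ hξ
        exact Ordinal.iSup_lt_ord (by rw [Cardinal.mk_eq_aleph0]; exact hl)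
          (fun n => (hGmem n ξ hξ).2.2)
      have hGF : ∀ (n : ℕ) (ξ : Ordinal.{0}), G n ξ ≤ F ξ :=
        fun n ξ => le_ciSup (Ordinal.bddAbove_range _) _
      obtain ⟨δ, hδS, hδC, hδl, _, hδcl⟩ :
          ∃ δ, δ ∈ S ∧ δ ∈ C ∧ δ < l ∧ δ ≠ 0 ∧ ∀ ξ < δ, F ξ < δ := by
        obtain ⟨δ, hδS, hδD⟩ := hS _ (clubIn_inter hl hC (clubIn_closurePts hl hcard F hFlt))
        exact ⟨δ, hδS, hδD.1, hδD.2.1, hδD.2.2.1, hδD.2.2.2⟩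
      have hδcof : δ.cof = ℵ₀ := (hsub δ hδS).2
      obtain ⟨ε, hεmono, hεδ, hεcof⟩ := exists_seq_of_cof_aleph0 hδcof
      -- the anchors q and block maxima p
      set q : ℕ → Ordinal.{0} := fun n => Nat.rec (ε 0) (fun m v => max (G m v) (ε (m + 1))) n
        with hq
      have hqstep : ∀ n, q (n + 1) = max (G n (q n)) (ε (n + 1)) := fun n => rfl
      have hqδ : ∀ n, q n < δ := by
        intro n
        induction n with
        | zero => exact hεδ 0
        | succ n ih =>
          rw [hqstep]
          exact max_lt ((hGF n (q n)).trans_lt (hδcl _ ih)) (hεδ (n + 1))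
      have hql : ∀ n, q n < l := fun n => (hqδ n).trans hδl
      set p : ℕ → Ordinal.{0} := fun n => G n (q n) with hp
      have hqp : ∀ n, q n < p n := fun n => (hGmem n (q n) (hql n)).2.1
      have hpδ : ∀ n, p n < δ := fun n => (hGF n (q n)).trans_lt (hδcl _ (hqδ n))
      have hpq : ∀ n, p n ≤ q (n + 1) := by
        intro n; rw [hqstep]; exact le_max_left _ _
      have hεq : ∀ n, ε n ≤ q n := by
        intro n
        cases n with
        | zero => exact le_rfl
        | succ n => rw [hqstep]; exact le_max_right _ _
      have hqmono : Monotone q := monotone_nat_of_le_succ fun n => ((hqp n).trans_le (hpq n)).le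
      have hsupp : ∀ y < δ, ∃ n, y < p n := by
        intro y hy
        obtain ⟨n, hn⟩ := hεcof y hy
        exact ⟨n, hn.trans_le ((hεq n).trans (hqp n).le)⟩
      -- the block embeddings
      have hgex : ∀ n, ∃ g : Ordinal.{0} → Ordinal.{0},
          StrictMonoOn g (Iio (η n + 1)) ∧
          (∀ y < η n + 1, Order.IsSuccLimit y → IsLUB (g '' Iio y) (g y)) ∧
          (∀ y < η n + 1, g y ∈ S ∩ Ioo (q n) l) ∧ g (η n) = p n :=
        fun n => hGspec n (q n) (hql n)
      set g : ℕ → Ordinal.{0} → Ordinal.{0} := fun n => (hgex n).choose with hgdef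
      have hgmono : ∀ n, StrictMonoOn (g n) (Iio (η n + 1)) := fun n => (hgex n).choose_spec.1
      have hgcont : ∀ n, ∀ y < η n + 1, Order.IsSuccLimit y → IsLUB (g n '' Iio y) (g n y) :=
        fun n => (hgex n).choose_spec.2.1
      have hgmem : ∀ n, ∀ y < η n + 1, g n y ∈ S ∧ q n < g n y ∧ g n y < l := by
        intro n y hy
        have := (hgex n).choose_spec.2.2.1 y hy
        exact ⟨this.1, this.2.1, this.2.2⟩
      have hgtop : ∀ n, g n (η n) = p n := fun n => (hgex n).choose_spec.2.2.2
      have hghigh : ∀ n, ∀ y < η n + 1, g n y ≤ p n := by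
        intro n y hy
        rcases eq_or_lt_of_le (ltao.1 hy) with rfl | hlt
        · exact (hgtop n).le
        · exact (hgtop n ▸ hgmono n hy (Set.mem_Iio.2 (lt_add_one _)) hlt).le
      -- the index function
      set k : Ordinal.{0} → ℕ := fun y => sInf {n : ℕ | y < A (n + 1)} with hk
      have hk1 : ∀ y < γ, y < A (k y + 1) := fun y hy => Nat.sInf_mem (hAcof y hy)
      have hk2 : ∀ y, A (k y) ≤ y := by
        intro y
        rcases Nat.eq_zero_or_pos (k y) with h0 | hpos
        · rw [h0]; exact zero_le
        · have hlt : k y - 1 < k y := by omega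
          have hnm := Nat.notMem_of_lt_sInf
            (show k y - 1 < sInf {n : ℕ | y < A (n + 1)} from hlt)
          rw [Set.mem_setOf_eq, not_lt] at hnm
          have heq : k y - 1 + 1 = k y := by omega
          rwa [heq] at hnm
      have hkuniq : ∀ (y : Ordinal.{0}) (n : ℕ), A n ≤ y → y < A (n + 1) → k y = n := by
        intro y n h1 h2
        apply le_antisymm (Nat.sInf_le h2)
        by_contra hcon
        push_neg at hcon
        have h4 : A (k y + 1) ≤ A n := hAm (Nat.succ_le_of_lt hcon)
        have h3 := Nat.sInf_mem (⟨n, h2⟩ : {m : ℕ | y < A (m + 1)}.Nonempty)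
        rw [Set.mem_setOf_eq] at h3
        exact absurd (h3.trans_le (h4.trans h1)) (lt_irrefl y)
      -- basic block facts for y < γ
      have hzlt : ∀ y < γ, y - A (k y) < η (k y) + 1 := by
        intro y hy
        by_contra hcon
        push_neg at hcon
        have h1 : A (k y) + (η (k y) + 1) ≤ A (k y) + (y - A (k y)) :=
          add_le_add_right hcon _
        rw [Ordinal.add_sub_cancel_of_le (hk2 y), hηspec] at h1
        exact absurd (hk1 y hy) (not_lt.2 h1)
      -- the global embedding
      set f : Ordinal.{0} → Ordinal.{0} := fun y =>
        if y < γ then g (k y) (y - A (k y)) else δ with hfdef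
      have hfval : ∀ y < γ, f y = g (k y) (y - A (k y)) := fun y hy => if_pos hy
      have hftop : f γ = δ := if_neg (lt_irrefl γ)
      have hfS : ∀ y < γ, f y ∈ S ∧ q (k y) < f y ∧ f y < l := by
        intro y hy
        rw [hfval y hy]
        exact hgmem (k y) _ (hzlt y hy)
      have hfhigh : ∀ y < γ, f y ≤ p (k y) := by
        intro y hy
        rw [hfval y hy]
        exact hghigh (k y) _ (hzlt y hy)
      have hfδ : ∀ y < γ, f y < δ := fun y hy => (hfhigh y hy).trans_lt (hpδ (k y))
      have hkmono : ∀ x y, x < y → y < γ → k x ≤ k y := by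
        intro x y hxy hy
        exact Nat.sInf_le (Set.mem_setOf_eq ▸ (hxy.trans (hk1 y hy)))
      have hsame : ∀ x y, x < y → y < γ → k x = k y →
          f x < f y := by
        intro x y hxy hy hkeq
        have hxγ : x < γ := hxy.trans hy
        rw [hfval x hxγ, hfval y hy, hkeq]
        apply hgmono (k y) (hkeq ▸ hzlt x hxγ) (hzlt y hy)
        by_contra hcon
        push_neg at hcon
        have h1 : A (k y) + (y - A (k y)) ≤ A (k y) + (x - A (k y)) := add_le_add_right hcon _
        rw [Ordinal.add_sub_cancel_of_le (hk2 y), ← hkeq,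
          Ordinal.add_sub_cancel_of_le (hk2 x)] at h1
        exact absurd (hxy.trans_le h1) (lt_irrefl x)
      have hdiff : ∀ x y, x < y → y < γ → k x < k y → f x < f y := by
        intro x y hxy hy hkxy
        calc f x ≤ p (k x) := hfhigh x (hxy.trans hy)
        _ ≤ q (k x + 1) := hpq _
        _ ≤ q (k y) := hqmono (show k x + 1 ≤ k y by omega)
        _ < f y := (hfS y hy).2.1
      have hfmono : ∀ x y, x < y → y < γ → f x < f y := by
        intro x y hxy hy
        rcases eq_or_lt_of_le (hkmono x y hxy hy) with heq | hlt
        · exact hsame x y hxy hy heq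
        · exact hdiff x y hxy hy hlt
      -- p n is attained as a value of f
      have hpval : ∀ n, f (A n + η n) = p n ∧ A n + η n < γ := by
        intro n
        have h1 : A n + η n < A (n + 1) := by
          rw [← hηspec n]
          exact add_lt_add_right (lt_add_one _) _
        have h2 : A n + η n < γ := h1.trans (hAlt (n + 1))
        have h3 : k (A n + η n) = n := hkuniq _ n (le_self_add) h1
        refine ⟨?_, h2⟩
        rw [hfval _ h2, h3, Ordinal.add_sub_cancel, hgtop]
      refine ⟨δ, ⟨f, ?_, ?_, ?_, hftop⟩, hδC⟩
      · -- strict monotonicity on Iio (γ + 1)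
        intro x hx y hy hxy
        rcases eq_or_lt_of_le (ltao.1 hy) with rfl | hyγ
        · rw [hftop]
          exact hfδ x hxy
        · exact hfmono x y hxy hyγ
      · -- continuity
        intro y hy hylim
        rcases eq_or_lt_of_le (ltao.1 hy) with rfl | hyγ
        · rw [hftop]
          constructor
          · rintro _ ⟨x, hx, rfl⟩
            exact (hfδ x hx).le
          · intro w hw
            by_contra hcon
            push_neg at hcon
            obtain ⟨n, hn⟩ := hsupp w hcon
            have := hw ⟨A n + η n, (hpval n).2, (hpval n).1⟩
            exact absurd (hn.trans_le this) (lt_irrefl w)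
        · -- y < γ limit
          set n := k y with hn
          set z := y - A n with hz
          have hzy : A n + z = y := Ordinal.add_sub_cancel_of_le (hk2 y)
          have hAform : ∀ m : ℕ, A m = 0 ∨ ∃ w, A m = Order.succ w := by
            intro m
            cases m with
            | zero => exact Or.inl rfl
            | succ m =>
              refine Or.inr ⟨max (A m) (b m), ?_⟩
              rw [hAstep, Ordinal.add_one_eq_succ]
          have hzlim : Order.IsSuccLimit z := by
            rcases Ordinal.zero_or_succ_or_isSuccLimit z with h0 | ⟨e, he⟩ | hlm
            · exfalso
              rw [h0, add_zero] at hzy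
              rcases hAform n with hn0 | ⟨w, hw⟩
              · rw [hn0] at hzy
                exact hylim.ne_bot hzy.symm
              · rw [hw] at hzy
                exact Order.not_isSuccLimit_succ _ (hzy ▸ hylim)
            · exfalso
              rw [← he, Ordinal.add_succ] at hzy
              exact Order.not_isSuccLimit_succ _ (hzy ▸ hylim)
            · exact hlm
          have hlub := hgcont n z (hzlt y hyγ) hzlim
          rw [hfval y hyγ, ← hz]
          constructor
          · rintro _ ⟨x, hx, rfl⟩
            rcases eq_or_lt_of_le (hkmono x y hx hyγ) with heq | hlt
            · have hAnx : A n ≤ x := by rw [hn, ← heq]; exact hk2 x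
              rw [hfval x (hx.trans hyγ), heq, ← hn]
              apply hlub.1
              refine ⟨x - A n, ?_, rfl⟩
              show x - A n < z
              by_contra hcon
              push_neg at hcon
              have h1 : A n + z ≤ A n + (x - A n) := add_le_add_right hcon _
              rw [hzy, Ordinal.add_sub_cancel_of_le hAnx] at h1
              exact absurd (hx.trans_le h1) (lt_irrefl x)
            · have := hdiff x y hx hyγ hlt
              have h2 : f x ≤ q n := (hfhigh x (hx.trans hyγ)).trans
                ((hpq _).trans (hqmono (show k x + 1 ≤ n by rw [hn]; omega)))
              exact h2.trans (hgmem n z (hzlt y hyγ)).2.1.le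
          · intro w hw
            apply hlub.2
            rintro _ ⟨v, hv, rfl⟩
            have hxlt : A n + v < y := by rw [← hzy]; exact add_lt_add_right hv _
            have hxγ : A n + v < γ := hxlt.trans hyγ
            have hkx : k (A n + v) = n :=
              hkuniq _ n (le_self_add) (hxlt.trans (hk1 y hyγ))
            have : f (A n + v) = g n v := by
              rw [hfval _ hxγ, hkx, Ordinal.add_sub_cancel]
            rw [← this]
            exact hw ⟨A n + v, hxlt, rfl⟩
      · -- membership
        intro y hy
        rcases eq_or_lt_of_le (ltao.1 hy) with rfl | hyγ
        · rw [hftop]; exact hδS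
        · exact (hfS y hyγ).1

/-- In the non-stationary case, a continuous increasing `ω₁`-chain through the club,
all of whose values at infinite arguments have countable cofinality. -/
lemma club_case {C : Set Ordinal.{0}} (hl : ℵ₀ < l.cof) (hω₁l : ω₁ ≤ l)
    (hcard : ∀ x < l, x.card < l.cof) (hC : ClubIn C l) :
    ∃ g : Ordinal.{0} → Ordinal.{0},
      (∀ ξ, ξ < ω₁ → g ξ ∈ C ∧ g ξ < l ∧ ∀ η < ξ, g η < g ξ) ∧
      (∀ ξ, ξ < ω₁ → Order.IsSuccLimit ξ → g ξ = Ordinal.bsup.{0,0} ξ (fun a _ => g a)) := by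
  have hlim := isLimit_of_cof hl
  have hCne : C.Nonempty := by
    obtain ⟨y, hy, _⟩ := hC.2.1 0 hlim.pos
    exact ⟨y, hy⟩
  set g : Ordinal.{0} → Ordinal.{0} := fun o =>
    Ordinal.limitRecOn o (sInf C) (fun _ ih => sInf (C ∩ Ioi ih))
      (fun o _ ih => Ordinal.bsup.{0,0} o (fun a h => ih a h)) with hg
  have hg0 : g 0 = sInf C := Ordinal.limitRecOn_zero _ _ _
  have hgs : ∀ o, g (succ o) = sInf (C ∩ Ioi (g o)) := fun o => Ordinal.limitRecOn_succ _ _ _ _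
  have hgl : ∀ o (h : Order.IsSuccLimit o), g o = Ordinal.bsup.{0,0} o (fun a _ => g a) :=
    fun o h => Ordinal.limitRecOn_limit _ _ _ _ h
  have hinv : ∀ ξ, ξ < ω₁ → g ξ ∈ C ∧ g ξ < l ∧ ∀ η < ξ, g η < g ξ := by
    intro ξ
    induction ξ using Ordinal.induction with
    | h ξ IH =>
      intro hξ
      rcases Ordinal.zero_or_succ_or_isSuccLimit ξ with rfl | ⟨o, rfl⟩ | hξlim
      · have h1 : g 0 ∈ C := hg0 ▸ csInf_mem hCne
        exact ⟨h1, hC.1 h1, fun η hη => absurd hη not_lt_zero⟩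
      · have ho : o < ω₁ := (lt_succ o).trans hξ
        obtain ⟨hoC, hol, homono⟩ := IH o (lt_succ o) ho
        have h1 := nextIn hC hol
        rw [← hgs o] at h1
        refine ⟨h1.1, hC.1 h1.1, fun η hη => ?_⟩
        rcases eq_or_lt_of_le (Order.lt_succ_iff.1 hη) with rfl | hη'
        · exact h1.2
        · exact (homono η hη').trans h1.2
      · have hmono : ∀ η < ξ, g η < g ξ := by
          intro η hη
          have h1 : g η < g (succ η) := by
            rw [hgs]
            exact (nextIn hC (IH η hη (hη.trans hξ)).2.1).2
          have h2 : g (succ η) ≤ g ξ := by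
            rw [hgl ξ hξlim]
            exact Ordinal.le_bsup _ _ (hξlim.succ_lt hη)
          exact h1.trans_le h2
        have hgξl : g ξ < l := by
          rw [hgl ξ hξlim]
          apply Ordinal.bsup_lt_ord
          · exact hcard ξ (hξ.trans_le hω₁l)
          · intro a ha
            exact (IH a ha (ha.trans hξ)).2.1
        have hgξC : g ξ ∈ C := by
          apply hC.2.2 (g ξ) hgξl
          · have h0 : g 0 < g ξ := hmono 0 hξlim.pos
            exact pos_iff_ne_zero.1 (zero_le.trans_lt h0)
          · intro y hy
            rw [hgl ξ hξlim] at hy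
            obtain ⟨a, ha, hya⟩ := (Ordinal.lt_bsup _).1 hy
            exact ⟨g a, (IH a ha (ha.trans hξ)).1, hya, hmono a ha⟩
        exact ⟨hgξC, hgξl, hmono⟩
  exact ⟨g, hinv, fun ξ _ h => hgl ξ h⟩

lemma mul_omega_lt_omega1 {ξ : Ordinal.{0}} (hξ : ξ < ω₁) : ω * (1 + ξ) < ω₁ := by
  rw [← Cardinal.ord_aleph, Cardinal.lt_ord] at hξ ⊢
  rw [Ordinal.card_mul, Ordinal.card_add, Ordinal.card_omega0, Ordinal.card_one]
  have hξ' : ξ.card ≤ ℵ₀ := by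
    rw [← Cardinal.succ_aleph0, Order.lt_succ_iff] at hξ
    exact hξ
  have h1 : (1 : Cardinal.{0}) + ξ.card ≤ ℵ₀ := by
    calc (1 : Cardinal.{0}) + ξ.card ≤ ℵ₀ + ℵ₀ := add_le_add Cardinal.one_lt_aleph0.le hξ'
    _ = ℵ₀ := Cardinal.aleph0_add_aleph0
  calc ℵ₀ * (1 + ξ.card) ≤ ℵ₀ * ℵ₀ := mul_le_mul' le_rfl h1
  _ = ℵ₀ := Cardinal.aleph0_mul_aleph0
  _ < ℵ₁ := Cardinal.aleph0_lt_aleph_one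

/-- The main positive result: the maximum is a pigeonhole ordinal. -/
lemma main_mem {ι : Type} (r : ι) (α : ι → Ordinal.{0}) (hr : α r = ω₁)
    (ho : ∀ i, i ≠ r → 2 ≤ α i ∧ α i < ω₁)
    (hl : ℵ₀ < l.cof) (hω₁l : ω₁ ≤ l) (hcard : ∀ x < l, x.card < l.cof)
    (hι : #ι < l.cof) :
    ∀ c : Ordinal → ι, ∃ i, HomeoCopy (α i) (Iio l ∩ c ⁻¹' {i}) := by
  haveI : Nonempty ι := ⟨r⟩
  intro c
  set S : Set Ordinal.{0} := {x | x < l ∧ x.cof = ℵ₀ ∧ c x ≠ r} with hSdef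
  by_cases hstat : StatIn S l
  · -- some colour other than r is stationary: use Friedman's theorem
    obtain ⟨i, hSi⟩ := exists_statIn (T := fun i => {x | c x = i}) hι hl hstat
      (fun x _ => ⟨c x, rfl⟩)
    obtain ⟨x₀, hx₀⟩ := hSi.nonempty hl
    have hir : i ≠ r := hx₀.2 ▸ hx₀.1.2.2
    have hαi := ho i hir
    have hfr := friedman hl hcard (α i) hαi.2 (S ∩ {x | c x = i})
      (fun x hx => ⟨hx.1.1, hx.1.2.1⟩) hSi
    obtain ⟨δ, f, hfmono, hfcont, hfmem, _⟩ := hfr.nonempty hl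
    refine ⟨i, IsGoodF.homeoCopy (a := α i) (f := f) ?_⟩
    refine ⟨hfmono.mono (fun x hx => Set.mem_Iio.2 ((Set.mem_Iio.1 hx).trans (lt_add_one _))), ?_, ?_⟩
    · intro y hy hylim
      exact hfcont y (hy.trans (lt_add_one _)) hylim
    · intro y hy
      have := hfmem y (hy.trans (lt_add_one _))
      exact ⟨this.1.1, this.2⟩
  · -- colour r contains a club's worth of countable-cofinality points
    obtain ⟨C, hC, hCS⟩ : ∃ C, ClubIn C l ∧ S ∩ C = ∅ := by
      by_contra h
      push_neg at h
      exact hstat h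
    obtain ⟨g, hinv, hglim⟩ := club_case hl hω₁l hcard hC
    have hgcof : ∀ ξ, ξ < ω₁ → Order.IsSuccLimit ξ → (g ξ).cof = ℵ₀ := by
      intro ξ hξ hξlim
      have hcofξ : ξ.cof = ℵ₀ := by
        apply le_antisymm
        · have h1 : ξ.card < ℵ₁ := Cardinal.lt_ord.1 (by rwa [Cardinal.ord_aleph])
          rw [← Cardinal.succ_aleph0, Order.lt_succ_iff] at h1
          exact (Ordinal.cof_le_card ξ).trans h1
        · exact Ordinal.aleph0_le_cof.2 hξlim
      obtain ⟨t, htmono, htξ, htcof⟩ := exists_seq_of_cof_aleph0 hcofξ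
      apply cof_eq_aleph0_of_seq (fun m => g (t m))
      · intro m
        exact (hinv ξ hξ).2.2 (t m) (htξ m)
      · intro y hy
        rw [hglim ξ hξ hξlim] at hy
        obtain ⟨a, ha, hya⟩ := (Ordinal.lt_bsup _).1 hy
        obtain ⟨m, hm⟩ := htcof a ha
        exact ⟨m, hya.trans ((hinv (t m) ((htξ m).trans hξ)).2.2 a hm)⟩
    have hgr : ∀ ξ, ξ < ω₁ → Order.IsSuccLimit ξ → c (g ξ) = r := by
      intro ξ hξ hξlim
      by_contra hne
      have : g ξ ∈ S ∩ C :=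
        ⟨⟨(hinv ξ hξ).2.1, hgcof ξ hξ hξlim, hne⟩, (hinv ξ hξ).1⟩
      rw [hCS] at this
      exact this
    -- the embedding ξ ↦ g (ω * (1 + ξ))
    set fω : Ordinal.{0} → Ordinal.{0} := fun ξ => g (ω * (1 + ξ)) with hfω
    have hmlim : ∀ ξ : Ordinal.{0}, Order.IsSuccLimit (ω * (1 + ξ)) := by
      intro ξ
      rw [Ordinal.isSuccLimit_iff_omega0_dvd]
      constructor
      · have h1 : (0 : Ordinal.{0}) < 1 + ξ :=
          lt_of_lt_of_le zero_lt_one (le_self_add)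
        exact (mul_pos Ordinal.omega0_pos h1).ne'
      · exact dvd_mul_right ω (1 + ξ)
    have hmono : ∀ ξ η : Ordinal.{0}, ξ < η → ω * (1 + ξ) < ω * (1 + η) := by
      intro ξ η h
      rw [mul_lt_mul_iff_of_pos_left Ordinal.omega0_pos]
      rwa [add_lt_add_iff_left]
    refine ⟨r, hr ▸ IsGoodF.homeoCopy (a := ω₁) (f := fω) ⟨?_, ?_, ?_⟩⟩
    · -- strict monotonicity
      intro ξ hξ η hη hξη
      exact (hinv _ (mul_omega_lt_omega1 hη)).2.2 _ (hmono ξ η hξη)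
    · -- continuity
      intro ξ hξ hξlim
      have hθ : ω * (1 + ξ) < ω₁ := mul_omega_lt_omega1 hξ
      constructor
      · rintro _ ⟨η, hη, rfl⟩
        exact ((hinv _ hθ).2.2 _ (hmono η ξ hη)).le
      · intro w hw
        show g (ω * (1 + ξ)) ≤ w
        rw [hglim _ hθ (hmlim ξ)]
        apply Ordinal.bsup_le
        intro a ha
        have h1ξ : Order.IsSuccLimit (1 + ξ) := Ordinal.isSuccLimit_add 1 hξlim
        obtain ⟨d, hd, had⟩ := (Ordinal.lt_mul_iff_of_isSuccLimit h1ξ).1 ha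
        obtain ⟨ξ'', hξ''ξ, hdξ''⟩ : ∃ ξ'' < ξ, d ≤ 1 + ξ'' := by
          rcases le_or_gt d 1 with h | h
          · exact ⟨0, hξlim.pos, by rw [add_zero]; exact h⟩
          · refine ⟨d - 1, ?_, ?_⟩
            · have h1e : 1 + (d - 1) = d := Ordinal.add_sub_cancel_of_le h.le
              rw [← h1e] at hd
              exact (add_lt_add_iff_left 1).1 hd
            · rw [Ordinal.add_sub_cancel_of_le h.le]
        have haθ : a < ω * (1 + ξ'') :=
          had.trans_le (mul_le_mul_right hdξ'' ω)
        have h2 : g a < fω ξ'' :=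
          (hinv _ (mul_omega_lt_omega1 (hξ''ξ.trans hξ))).2.2 a haθ
        exact h2.le.trans (hw ⟨ξ'', hξ''ξ, rfl⟩)
    · -- membership
      intro ξ hξ
      have hθ : ω * (1 + ξ) < ω₁ := mul_omega_lt_omega1 hξ
      refine ⟨(hinv _ hθ).2.1, ?_⟩
      show c (g (ω * (1 + ξ))) ∈ ({r} : Set ι)
      rw [Set.mem_singleton_iff]
      exact hgr _ hθ (hmlim ξ)
  
lemma homeoCopy_two {γ : Ordinal.{0}} {s : Set Ordinal.{0}} (h : HomeoCopy γ s) (hγ : 2 ≤ γ) :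
    ∃ x ∈ s, ∃ y ∈ s, x ≠ y := by
  obtain ⟨t, hts, ⟨e⟩⟩ := h
  have h12 : (1 : Ordinal.{0}) < 2 := by
    rw [← one_add_one_eq_two]; exact lt_add_one 1
  have h1 : (1 : Ordinal.{0}) < γ := h12.trans_le hγ
  have h0 : (0 : Ordinal.{0}) < γ := zero_lt_one.trans h1
  set a := e ⟨0, h0⟩ with ha
  set b := e ⟨1, h1⟩ with hb
  refine ⟨a.1, hts a.2, b.1, hts b.2, fun hab => ?_⟩
  have h2 : (⟨0, h0⟩ : (Iio γ : Set Ordinal.{0})) = ⟨1, h1⟩ :=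
    e.toEquiv.injective (Subtype.ext hab)
  have := congrArg Subtype.val h2
  exact zero_ne_one this

lemma homeoCopy_card {γ : Ordinal.{0}} {s : Set Ordinal.{0}} (h : HomeoCopy γ s) :
    #(Iio γ : Set Ordinal.{0}) ≤ #s := by
  obtain ⟨t, hts, ⟨e⟩⟩ := h
  calc #(Iio γ : Set Ordinal.{0}) = #t := Cardinal.mk_congr e.toEquiv
  _ ≤ #s := Cardinal.mk_le_mk_of_subset hts

lemma two_le_omega1 : (2 : Ordinal.{0}) ≤ ω₁ := by
  have h1 : ((2 : ℕ) : Ordinal.{0}) < ω := Ordinal.nat_lt_omega0 2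
  have h2 : ((2 : ℕ) : Ordinal.{0}) = (2 : Ordinal.{0}) := by norm_num
  rw [h2] at h1
  exact h1.le.trans Ordinal.omega0_lt_omega_one.le

lemma lower_bound {ι : Type} (r : ι) (α : ι → Ordinal.{0}) (hr : α r = ω₁)
    (ho : ∀ i, i ≠ r → 2 ≤ α i ∧ α i < ω₁) {β : Ordinal.{0}}
    (hβ : TopPHFam β α) : max ω₁ (Order.succ #ι).ord ≤ β := by
  have hα2 : ∀ i, 2 ≤ α i := by
    intro i
    by_cases hi : i = r
    · subst hi; rw [hr]; exact two_le_omega1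
    · exact (ho i hi).1
  apply max_le
  · obtain ⟨i, hcopy⟩ := hβ (fun _ => r)
    have hi : i = r := by
      by_contra hir
      have hempty : (Iio β ∩ (fun _ : Ordinal.{0} => r) ⁻¹' {i}) = ∅ := by
        ext x
        simp only [Set.mem_inter_iff, Set.mem_preimage, Set.mem_singleton_iff,
          Set.mem_empty_iff_false, iff_false, not_and]
        exact fun _ h => hir h.symm
      rw [hempty] at hcopy
      obtain ⟨x, hx, -⟩ := homeoCopy_two hcopy (hα2 i)
      exact hx
    rw [hi, hr] at hcopy
    have h1 := homeoCopy_card hcopy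
    have h2 : #(Iio β ∩ (fun _ : Ordinal.{0} => r) ⁻¹' {r} : Set Ordinal.{0})
        ≤ #(Iio β : Set Ordinal.{0}) :=
      Cardinal.mk_le_mk_of_subset Set.inter_subset_left
    have h3 := h1.trans h2
    rw [Cardinal.mk_Iio_ordinal, Cardinal.mk_Iio_ordinal, Ordinal.card_omega,
      Cardinal.lift_le] at h3
    rw [← Cardinal.ord_aleph]
    exact Cardinal.ord_le.2 h3
  · by_contra hcon
    push_neg at hcon
    have hcb : β.card ≤ #ι := Order.lt_succ_iff.1 (Cardinal.lt_ord.1 hcon)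
    have hemb : Nonempty ((Iio β : Set Ordinal.{0}) ↪ ULift.{1} ι) := by
      rw [← Cardinal.le_def, Cardinal.mk_uLift, Cardinal.mk_Iio_ordinal]
      exact Cardinal.lift_le.2 hcb
    obtain ⟨j⟩ := hemb
    set c : Ordinal.{0} → ι := fun x => if h : x < β then (j ⟨x, h⟩).down else r with hc
    obtain ⟨i, hcopy⟩ := hβ c
    obtain ⟨x, hx, y, hy, hxy⟩ := homeoCopy_two hcopy (hα2 i)
    obtain ⟨hxβ, hxc⟩ := hx
    obtain ⟨hyβ, hyc⟩ := hy
    apply hxy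
    rw [Set.mem_preimage, Set.mem_singleton_iff] at hxc hyc
    rw [hc] at hxc hyc
    simp only [dif_pos (Set.mem_Iio.1 hxβ)] at hxc
    simp only [dif_pos (Set.mem_Iio.1 hyβ)] at hyc
    have hj : j ⟨x, hxβ⟩ = j ⟨y, hyβ⟩ := by
      apply ULift.ext
      rw [hxc, hyc]
    exact congrArg Subtype.val (j.injective hj)
end PH

/-- If `α_r = ω₁` and `2 ≤ αᵢ < ω₁` for `i ≠ r`, then `P^top(αᵢ)_{i∈κ} = max{ω₁, κ⁺}`;
in particular, for infinite `κ`, any `κ`-colouring of `κ⁺` has a copy of `ω₁` in colour `r`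
or a copy of `αᵢ` in some colour `i ≠ r`. -/
theorem topPH_one_omega1 {ι : Type} (r : ι) (α : ι → Ordinal.{0}) (hr : α r = ω₁)
    (ho : ∀ i, i ≠ r → 2 ≤ α i ∧ α i < ω₁) :
    IsLeast {β : Ordinal.{0} | TopPHFam β α} (max ω₁ (Order.succ (Cardinal.mk ι)).ord) ∧
      (ℵ₀ ≤ Cardinal.mk ι → ∀ c : Ordinal.{0} → ι,
        HomeoCopy ω₁ (Iio (Order.succ (Cardinal.mk ι)).ord ∩ c ⁻¹' {r}) ∨
        ∃ i, i ≠ r ∧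
          HomeoCopy (α i) (Iio (Order.succ (Cardinal.mk ι)).ord ∩ c ⁻¹' {i})) := by
  have hμreg : (ℵ₁ ⊔ Order.succ (#ι)).IsRegular := by
    rcases le_total (Order.succ (#ι)) ℵ₁ with h | h
    · rw [sup_eq_left.2 h]
      exact Cardinal.isRegular_aleph_one
    · rw [sup_eq_right.2 h]
      exact Cardinal.isRegular_succ
        (Order.lt_succ_iff.1 (Cardinal.aleph0_lt_aleph_one.trans_le h))
  have hcof : (ℵ₁ ⊔ Order.succ (#ι)).ord.cof = ℵ₁ ⊔ Order.succ (#ι) := hμreg.cof_eq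
  have heq : max ω₁ (Order.succ (#ι)).ord = (ℵ₁ ⊔ Order.succ (#ι)).ord := by
    rw [Cardinal.gc_ord_card.monotone_l.map_max, Cardinal.ord_aleph]
  have hℵ₀ : ℵ₀ < (ℵ₁ ⊔ Order.succ (#ι)).ord.cof := by
    rw [hcof]
    exact Cardinal.aleph0_lt_aleph_one.trans_le le_sup_left
  have hω₁l : ω₁ ≤ (ℵ₁ ⊔ Order.succ (#ι)).ord := by
    rw [← Cardinal.ord_aleph]
    exact Cardinal.gc_ord_card.monotone_l le_sup_left
  have hcard : ∀ x < (ℵ₁ ⊔ Order.succ (#ι)).ord, x.card < (ℵ₁ ⊔ Order.succ (#ι)).ord.cof := by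
    intro x hx
    rw [hcof]
    exact Cardinal.lt_ord.1 hx
  have hι : #ι < (ℵ₁ ⊔ Order.succ (#ι)).ord.cof := by
    rw [hcof]
    exact (Order.lt_succ_iff.2 le_rfl).trans_le le_sup_right
  have hmem : TopPHFam (max ω₁ (Order.succ (#ι)).ord) α := by
    rw [heq]
    exact PH.main_mem r α hr ho hℵ₀ hω₁l hcard hι
  refine ⟨⟨hmem, fun β hβ => PH.lower_bound r α hr ho hβ⟩, ?_⟩
  intro hκ c
  have hmax : max ω₁ (Order.succ (#ι)).ord = (Order.succ (#ι)).ord := by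
    apply max_eq_right
    rw [← Cardinal.ord_aleph, ← Cardinal.succ_aleph0]
    exact Cardinal.gc_ord_card.monotone_l (Order.succ_le_succ hκ)
  obtain ⟨i, hcopy⟩ := hmem c
  rw [hmax] at hcopy
  by_cases hir : i = r
  · rw [hir, hr] at hcopy
    exact Or.inl hcopy
  · exact Or.inr ⟨i, hir, hcopy⟩


end
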